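/- Any graph G that has no (k+1)-connected subgraph with more than 2k vertices admits a recursive decomposition (separator-tree) in which every leaf part has at most 2k vertices, every internal split is along a separation of order at most k with both strict sides nonempty, and the pieces are induced subgraphs. -/

import Mathlib

open Finset

/-- `HasSepTree G k A` says the induced subgraph of `G` on the vertex set `A` admits
a separator-tree of adhesion `k`: either `A` has at most `2k` vertices (a leaf), or
`A` splits along a separation of order at most `k`, with both strict sides nonempty,
whose two sides recursively admit separator-trees. -/
inductive HasSepTree {V : Type*} [DecidableEq V] (G : SimpleGraph V) (k : ℕ) :
    Finset V → Prop
  | leaf (A : Finset V) (h : A.card ≤ 2 * k) : HasSepTree G k A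
  | node (A B C : Finset V) (hunion : B ∪ C = A) (horder : (B ∩ C).card ≤ k)
      (hBne : (B \ C).Nonempty) (hCne : (C \ B).Nonempty)
      (hsep : ∀ b ∈ B \ C, ∀ c ∈ C \ B, ¬ G.Adj b c)
      (hB : HasSepTree G k B) (hC : HasSepTree G k C) : HasSepTree G k A

/-- Any finite graph with no `(k+1)`-connected (induced) subgraph on more than `2k`
vertices admits a separator-tree of adhesion `k` on its whole vertex set. -/
theorem separator_tree_exists {V : Type*} [Fintype V] [DecidableEq V]
    (G : SimpleGraph V) (k : ℕ) (hk : 1 ≤ k)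
    (h : ∀ A : Finset V, 2 * k < A.card →
      ¬ (k + 1 < A.card ∧ ∀ S : Finset V, S ⊆ A → S.card ≤ k →
        (G.induce ((A \ S : Finset V) : Set V)).Connected)) :
    HasSepTree G k Finset.univ := by
  classical
  suffices main : ∀ A : Finset V, HasSepTree G k A from main Finset.univ
  intro A
  induction A using Finset.strongInduction with
  | _ A ih =>
  by_cases hA : A.card ≤ 2 * k
  · exact HasSepTree.leaf A hA
  push_neg at hA
  have hk1 : k + 1 < A.card := by omega
  have hh := h A hA
  push_neg at hh
  obtain ⟨S, hSA, hSk, hncon⟩ := hh hk1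
  set s : Set V := ((A \ S : Finset V) : Set V) with hs
  have hASne : (A \ S).Nonempty := by
    rw [← Finset.card_pos, Finset.card_sdiff_of_subset hSA]
    omega
  have hne : Nonempty s := ⟨⟨hASne.choose, Finset.mem_coe.mpr hASne.choose_spec⟩⟩
  rw [SimpleGraph.connected_iff] at hncon
  push_neg at hncon
  have hnp : ¬ (G.induce s).Preconnected := fun hp => (hncon hp).false hne.some
  rw [SimpleGraph.Preconnected] at hnp
  push_neg at hnp
  obtain ⟨x, y, hxy⟩ := hnp
  set P : V → Prop := fun z => ∃ hz : z ∈ s, (G.induce s).Reachable x ⟨z, hz⟩ with hP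
  set B : Finset V := S ∪ (A \ S).filter P with hB
  set C : Finset V := S ∪ (A \ S).filter (fun z => ¬ P z) with hC
  have hBsub : B ⊆ A := by
    intro a ha
    rcases Finset.mem_union.mp ha with h1 | h1
    · exact hSA h1
    · exact (Finset.mem_sdiff.mp (Finset.mem_filter.mp h1).1).1
  have hCsub : C ⊆ A := by
    intro a ha
    rcases Finset.mem_union.mp ha with h1 | h1
    · exact hSA h1
    · exact (Finset.mem_sdiff.mp (Finset.mem_filter.mp h1).1).1
  -- characterize the strict sides
  have hBC : ∀ a, a ∈ B \ C ↔ a ∈ A \ S ∧ P a := by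
    intro a
    constructor
    · intro ha
      obtain ⟨h1, h2⟩ := Finset.mem_sdiff.mp ha
      have haS : a ∉ S := fun hx => h2 (Finset.mem_union.mpr (Or.inl hx))
      rcases Finset.mem_union.mp h1 with h3 | h3
      · exact absurd h3 haS
      · exact Finset.mem_filter.mp h3
    · rintro ⟨h1, h2⟩
      refine Finset.mem_sdiff.mpr ⟨Finset.mem_union.mpr (Or.inr (Finset.mem_filter.mpr ⟨h1, h2⟩)), ?_⟩
      intro hcon
      rcases Finset.mem_union.mp hcon with h3 | h3
      · exact (Finset.mem_sdiff.mp h1).2 h3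
      · exact (Finset.mem_filter.mp h3).2 h2
  have hCB : ∀ a, a ∈ C \ B ↔ a ∈ A \ S ∧ ¬ P a := by
    intro a
    constructor
    · intro ha
      obtain ⟨h1, h2⟩ := Finset.mem_sdiff.mp ha
      have haS : a ∉ S := fun hx => h2 (Finset.mem_union.mpr (Or.inl hx))
      rcases Finset.mem_union.mp h1 with h3 | h3
      · exact absurd h3 haS
      · exact Finset.mem_filter.mp h3
    · rintro ⟨h1, h2⟩
      refine Finset.mem_sdiff.mpr ⟨Finset.mem_union.mpr (Or.inr (Finset.mem_filter.mpr ⟨h1, h2⟩)), ?_⟩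
      intro hcon
      rcases Finset.mem_union.mp hcon with h3 | h3
      · exact (Finset.mem_sdiff.mp h1).2 h3
      · exact h2 (Finset.mem_filter.mp h3).2
  have hunion : B ∪ C = A := by
    apply Finset.Subset.antisymm
    · exact Finset.union_subset hBsub hCsub
    · intro a ha
      by_cases haS : a ∈ S
      · exact Finset.mem_union.mpr (Or.inl (Finset.mem_union.mpr (Or.inl haS)))
      · have haAS : a ∈ A \ S := Finset.mem_sdiff.mpr ⟨ha, haS⟩
        by_cases hPa : P a
        · exact Finset.mem_union.mpr (Or.inl (Finset.mem_union.mpr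
            (Or.inr (Finset.mem_filter.mpr ⟨haAS, hPa⟩))))
        · exact Finset.mem_union.mpr (Or.inr (Finset.mem_union.mpr
            (Or.inr (Finset.mem_filter.mpr ⟨haAS, hPa⟩))))
  have horder : (B ∩ C).card ≤ k := by
    refine le_trans (Finset.card_le_card ?_) hSk
    intro a ha
    obtain ⟨h1, h2⟩ := Finset.mem_inter.mp ha
    by_contra haS
    have hP1 : P a := by
      rcases Finset.mem_union.mp h1 with h3 | h3
      · exact absurd h3 haS
      · exact (Finset.mem_filter.mp h3).2
    rcases Finset.mem_union.mp h2 with h3 | h3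
    · exact haS h3
    · exact (Finset.mem_filter.mp h3).2 hP1
  have hxA : (x : V) ∈ A \ S := Finset.mem_coe.mp x.2
  have hyA : (y : V) ∈ A \ S := Finset.mem_coe.mp y.2
  have hBne : (B \ C).Nonempty := by
    refine ⟨x, (hBC x).mpr ⟨hxA, ⟨x.2, ?_⟩⟩⟩
    exact SimpleGraph.Reachable.refl x
  have hCne : (C \ B).Nonempty := by
    refine ⟨y, (hCB y).mpr ⟨hyA, ?_⟩⟩
    rintro ⟨hz, hr⟩
    exact hxy hr
  have hsep : ∀ b ∈ B \ C, ∀ c ∈ C \ B, ¬ G.Adj b c := by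
    intro b hb c hc hadj
    obtain ⟨hbAS, hbz, hbr⟩ := (hBC b).mp hb
    obtain ⟨hcAS, hPc⟩ := (hCB c).mp hc
    have hcz : c ∈ s := Finset.mem_coe.mpr hcAS
    have hadj' : (G.induce s).Adj ⟨b, hbz⟩ ⟨c, hcz⟩ := hadj
    exact hPc ⟨hcz, hbr.trans hadj'.reachable⟩
  have hBlt : B ⊂ A := by
    rw [Finset.ssubset_iff_of_subset hBsub]
    obtain ⟨c, hc⟩ := hCne
    exact ⟨c, hCsub (Finset.mem_sdiff.mp hc).1, (Finset.mem_sdiff.mp hc).2⟩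
  have hClt : C ⊂ A := by
    rw [Finset.ssubset_iff_of_subset hCsub]
    obtain ⟨b, hb⟩ := hBne
    exact ⟨b, hBsub (Finset.mem_sdiff.mp hb).1, (Finset.mem_sdiff.mp hb).2⟩
  exact HasSepTree.node A B C hunion horder hBne hCne hsep (ih B hBlt) (ih C hClt)
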